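/- Exponential law for k-spaces: for k-spaces X, Y, Z, a function f : X ×_k Y → Z is continuous if and only if the associated function g : X → kM(Y,Z), g(x)(y) = f(x,y), is continuous; this gives a bijection between continuous maps X ×_k Y → Z and continuous maps X → kM(Y,Z). -/

import Mathlib

open TopologicalSpace Topology

universe u

/-- The k-ification: the final topology on `X` relative to all continuous maps
from compact Hausdorff spaces into `X`. -/
def kTop (X : Type u) [TopologicalSpace X] : TopologicalSpace X :=
  ⨆ (C : CompHaus.{u}) (g : C → X) (_ : Continuous g),
    TopologicalSpace.coinduced g inferInstance

/-- Composition of continuous maps, with all topologies implicit (not instance-implicit). -/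
lemma kcomp {α β γ : Type*} {t1 : TopologicalSpace α} {t2 : TopologicalSpace β}
    {t3 : TopologicalSpace γ} {g : β → γ} {f : α → β}
    (hg : Continuous[t2, t3] g) (hf : Continuous[t1, t2] f) :
    Continuous[t1, t3] (g ∘ f) :=
  Continuous.comp hg hf

lemma kTop_le {X : Type u} [tX : TopologicalSpace X] : kTop X ≤ tX := by
  refine iSup_le fun C => iSup_le fun g => iSup_le fun hg => ?_
  exact continuous_iff_coinduced_le.mp hg

lemma probe_continuous_kTop {X : Type u} [tX : TopologicalSpace X]
    {C : CompHaus.{u}} {p : C → X} (hp : Continuous p) :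
    Continuous[_, kTop X] p := by
  rw [continuous_iff_coinduced_le]
  exact le_iSup_of_le C (le_iSup_of_le p (le_iSup_of_le hp le_rfl))

lemma continuous_kTop_dom {X Z : Type u} [tX : TopologicalSpace X]
    {tZ : TopologicalSpace Z} {f : X → Z} :
    Continuous[kTop X, tZ] f ↔
      ∀ (C : CompHaus.{u}) (p : C → X), Continuous p → Continuous[_, tZ] (f ∘ p) := by
  constructor
  · exact fun h C p hp => kcomp h (probe_continuous_kTop hp)
  · intro h
    exact continuous_iSup_dom.2 fun C => continuous_iSup_dom.2 fun p =>
      continuous_iSup_dom.2 fun hp => continuous_coinduced_dom.2 (h C p hp)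

/-- If `X` is a k-space, to check continuity of `f : X → Z` (any topology on `Z`),
it suffices to check on compact Hausdorff probes. -/
lemma continuous_of_kspace {X Z : Type u} [tX : TopologicalSpace X]
    {tZ : TopologicalSpace Z} (hX : kTop X = tX) {f : X → Z}
    (h : ∀ (C : CompHaus.{u}) (p : C → X), Continuous p → Continuous[_, tZ] (f ∘ p)) :
    Continuous[tX, tZ] f :=
  hX ▸ continuous_kTop_dom.mpr h

lemma kTop_crux {Y Z : Type u} [tY : TopologicalSpace Y] [tZ : TopologicalSpace Z]
    (hY : kTop Y = tY) (C : CompHaus.{u}) (u : C × Y → Z)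
    (hu : Continuous[kTop (C × Y), tZ] u) : Continuous u := by
  have slice : ∀ y : Y, Continuous fun c : C => u (c, y) := by
    intro y
    have h1 : Continuous fun c : C => ((c, y) : C × Y) :=
      continuous_id.prodMk continuous_const
    exact kcomp hu (probe_continuous_kTop h1)
  set F : Y → C(C, Z) := fun y => ⟨fun c => u (c, y), slice y⟩ with hF
  have hFc : Continuous F := by
    refine continuous_of_kspace hY fun D q hq => ?_
    apply ContinuousMap.continuous_of_continuous_uncurry
    have h2 : Continuous fun dc : D × C => ((dc.2, q dc.1) : C × Y) :=
      continuous_snd.prodMk (hq.comp continuous_fst)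
    have h3 : Continuous[_, kTop (C × Y)]
        (fun dc => ((dc.2, q dc.1) : C × Y) : (CompHaus.of (D × C)) → C × Y) :=
      probe_continuous_kTop h2
    exact kcomp hu h3
  haveI : LocallyCompactSpace C :=
    @WeaklyLocallyCompactSpace.locallyCompactSpace _ _ T2Space.r1Space
      (@instWeaklyLocallyCompactSpaceOfCompactSpace _ _ inferInstance)
  have h4 := ContinuousMap.continuous_uncurry_of_continuous ⟨F, hFc⟩
  have h5 : Continuous fun p : C × Y =>
      Function.uncurry (fun y c => (F y) c) (p.2, p.1) :=
    h4.comp (continuous_snd.prodMk continuous_fst)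
  convert h5 using 1
  rfl

theorem kTop_exponential_law {X Y Z : Type u}
    [tX : TopologicalSpace X] [tY : TopologicalSpace Y] [tZ : TopologicalSpace Z]
    (hX : kTop X = tX) (hY : kTop Y = tY) (hZ : kTop Z = tZ)
    (f : X × Y → Z) :
    Continuous[kTop (X × Y), tZ] f ↔
      ∃ g : X → C(Y, Z), (∀ x y, g x y = f (x, y)) ∧
        Continuous[tX, kTop C(Y, Z)] g := by
  constructor
  · intro hf
    have hslice : ∀ x : X, Continuous fun y : Y => f (x, y) := by
      intro x
      have h1 : Continuous[tY, kTop (X × Y)] fun y : Y => ((x, y) : X × Y) := by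
        refine continuous_of_kspace hY fun D q hq => ?_
        exact probe_continuous_kTop (continuous_const.prodMk hq)
      exact kcomp hf h1
    refine ⟨fun x => ⟨fun y => f (x, y), hslice x⟩, fun x y => rfl, ?_⟩
    refine continuous_of_kspace hX fun C p hp => ?_
    apply probe_continuous_kTop
    apply ContinuousMap.continuous_of_continuous_uncurry
    apply kTop_crux hY C (fun q : C × Y => f (p q.1, q.2))
    rw [continuous_kTop_dom]
    intro D r hr
    have h2 : Continuous fun d : D => ((p (r d).1, (r d).2) : X × Y) :=
      ((hp.comp continuous_fst).prodMk continuous_snd).comp hr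
    exact kcomp (g := f) (f := fun d : D => ((p (r d).1, (r d).2) : X × Y)) hf
      (probe_continuous_kTop h2)
  · rintro ⟨g, hg, hgc⟩
    rw [continuous_kTop_dom]
    intro D r hr
    have hE : Continuous[_, kTop C(Y, Z)] fun d : D => g (r d).1 :=
      kcomp hgc (continuous_fst.comp hr)
    have hE2 : Continuous fun d : D => g (r d).1 :=
      continuous_le_rng kTop_le hE
    have hq : Continuous fun d : D => (r d).2 := continuous_snd.comp hr
    have hE' : Continuous fun d : D => (g (r d).1).comp ⟨fun d' => (r d').2, hq⟩ :=
      (ContinuousMap.continuous_precomp _).comp hE2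
    haveI : LocallyCompactSpace D :=
    @WeaklyLocallyCompactSpace.locallyCompactSpace _ _ T2Space.r1Space
      (@instWeaklyLocallyCompactSpaceOfCompactSpace _ _ inferInstance)
    have h4 := ContinuousMap.continuous_uncurry_of_continuous
      ⟨fun d : D => (g (r d).1).comp ⟨fun d' => (r d').2, hq⟩, hE'⟩
    have h5 : Continuous fun d : D =>
        Function.uncurry (fun d d' =>
          ((g (r d).1).comp ⟨fun d' => (r d').2, hq⟩) d') (d, d) :=
      h4.comp (continuous_id.prodMk continuous_id)
    have heq : (f ∘ r) = fun d : D =>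
        Function.uncurry (fun d d' =>
          ((g (r d).1).comp ⟨fun d' => (r d').2, hq⟩) d') (d, d) := by
      funext d
      simp [Function.uncurry, hg]
    rw [heq]
    exact h5
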